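/- Let n be a positive integer and i an integer with 2 < i < n and gcd(i, 2n) = 1. Then the monomial X^e with e = (3^i + 1)/2 is planar over the finite field with 3^n elements. -/

import Mathlib

-- number theory: coprimality of m = (3^i-1)/2 with 3^(2n)-1
lemma nt_coprime (n i : ℕ) (hn : 0 < n) (hi : 0 < i)
    (hgcd : Nat.gcd i (2 * n) = 1) :
    Nat.Coprime ((3 ^ i - 1) / 2) (3 ^ (2 * n) - 1) := by
  set m := (3 ^ i - 1) / 2 with hm
  have h3i : 1 ≤ 3 ^ i := Nat.one_le_pow _ _ (by norm_num)
  have hodd3i : Odd (3 ^ i) := Odd.pow (⟨1, by norm_num⟩ : Odd 3)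
  have h2m : 2 * m = 3 ^ i - 1 := by
    rw [hm]; exact Nat.mul_div_cancel' (by rcases hodd3i with ⟨j, hj⟩; omega) 
  have hi_odd : Odd i := by
    rcases Nat.even_or_odd i with he | ho
    · exfalso
      have : 2 ∣ Nat.gcd i (2 * n) := Nat.dvd_gcd he.two_dvd ⟨n, rfl⟩
      omega
    · exact ho
  -- m is odd: 3^i ≡ 3 mod 4 when i odd
  have hmod4 : (3 ^ i) % 4 = 3 := by
    obtain ⟨k, rfl⟩ := hi_odd
    have : 3 ^ (2 * k + 1) = 9 ^ k * 3 := by rw [pow_succ, pow_mul]; norm_num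
    rw [this, Nat.mul_mod, Nat.pow_mod]
    norm_num
  have hm_odd : Odd m := by
    rcases Nat.even_or_odd m with he | ho
    · exfalso; obtain ⟨j, hj⟩ := he; omega
    · exact ho
  -- main: let d = gcd, show (3 : ZMod d) = 1
  set d := Nat.gcd m (3 ^ (2 * n) - 1) with hd
  have hQ : 1 ≤ 3 ^ (2 * n) := Nat.one_le_pow _ _ (by norm_num)
  have hQpos : 0 < 3 ^ (2 * n) - 1 := by
    have : 3 ^ 1 ≤ 3 ^ (2 * n) := Nat.pow_le_pow_right (by norm_num) (by omega)
    omega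
  have hdpos : 0 < d := Nat.pos_of_ne_zero (fun h => by
    rw [hd] at h; have := Nat.eq_zero_of_gcd_eq_zero_right h; omega)
  have hdm : d ∣ m := Nat.gcd_dvd_left _ _
  have hdQ : d ∣ 3 ^ (2 * n) - 1 := Nat.gcd_dvd_right _ _
  have hd3i : d ∣ 3 ^ i - 1 := hdm.trans ⟨2, by omega⟩
  -- (3 : ZMod d)^i = 1 and (3:ZMod d)^(2n) = 1
  have key : ∀ N : ℕ, d ∣ 3 ^ N - 1 → (3 : ZMod d) ^ N = 1 := by
    intro N hN
    obtain ⟨c, hc⟩ := hN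
    have h1 : 1 ≤ 3 ^ N := Nat.one_le_pow _ _ (by norm_num)
    have : (3 : ℕ) ^ N = d * c + 1 := by omega
    calc (3 : ZMod d) ^ N = ((3 ^ N : ℕ) : ZMod d) := by push_cast; ring
      _ = ((d * c + 1 : ℕ) : ZMod d) := by rw [this]
      _ = 1 := by push_cast; simp [ZMod.natCast_self]
  have hu3 : IsUnit (3 : ZMod d) := by
    have := key i hd3i
    exact IsUnit.of_mul_eq_one (3 ^ (i - 1)) (by
      rw [← pow_succ']  -- 3 * 3^(i-1) = 3^(i-1+1)
      rw [show i - 1 + 1 = i by omega, this])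
  obtain ⟨u, hu⟩ := hu3
  have hui : u ^ i = 1 := Units.ext (by push_cast [hu]; exact key i hd3i)
  have hu2n : u ^ (2 * n) = 1 := Units.ext (by push_cast [hu]; exact key (2 * n) hdQ)
  have hord : orderOf u ∣ Nat.gcd i (2 * n) :=
    Nat.dvd_gcd (orderOf_dvd_of_pow_eq_one hui) (orderOf_dvd_of_pow_eq_one hu2n)
  rw [hgcd, Nat.dvd_one] at hord
  have hu1 : u = 1 := orderOf_eq_one_iff.mp hord
  have h31 : (3 : ZMod d) = 1 := by rw [← hu, hu1]; rfl
  have h20 : (2 : ZMod d) = 0 := by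
    have : (3 : ZMod d) - 1 = 0 := by rw [h31]; ring
    calc (2 : ZMod d) = 3 - 1 := by ring
      _ = 0 := this
  have hd2 : d ∣ 2 := by
    have := (ZMod.natCast_eq_zero_iff 2 d).mp (by exact_mod_cast h20)
    exact this
  -- d divides m (odd) and d divides 2, so d = 1
  have hd12 : d = 1 ∨ d = 2 := (Nat.dvd_prime Nat.prime_two).mp hd2
  rcases hd12 with h | h
  · exact h
  · exfalso
    rw [h] at hdm
    rcases hm_odd with ⟨j, hj⟩
    omega

-- a + a⁻¹ = b + b⁻¹ implies a = b or a*b = 1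
lemma sum_inv_eq {K : Type*} [Field K] {a b : K} (ha : a ≠ 0) (hb : b ≠ 0)
    (h : a + a⁻¹ = b + b⁻¹) : a = b ∨ a * b = 1 := by
  have h2 : (a - b) * (a * b - 1) = 0 := by
    field_simp at h
    linear_combination h
  rcases mul_eq_zero.mp h2 with h3 | h3
  · left; exact sub_eq_zero.mp h3
  · right; exact sub_eq_zero.mp h3

-- powers with coprime exponents
lemma eq_one_of_two_pows {K : Type*} [Field K] {w : K} {m N : ℕ} (_hm : 0 < m)
    (hcop : Nat.Coprime m N) (h1 : w ^ m = 1) (h2 : w ^ N = 1) : w = 1 := by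
  have d1 : orderOf w ∣ m := orderOf_dvd_of_pow_eq_one h1
  have d2 : orderOf w ∣ N := orderOf_dvd_of_pow_eq_one h2
  have : orderOf w ∣ 1 := hcop ▸ Nat.dvd_gcd d1 d2
  exact orderOf_eq_one_iff.mp (Nat.dvd_one.mp this)

-- existence of z : z ≠ 0, z^2 - y*z + 1 = 0, y = z + z⁻¹
lemma exists_z {K : Type*} [Field K] [IsAlgClosed K] (h3 : (3 : K) = 0) (y : K) :
    ∃ z : K, z ≠ 0 ∧ z ^ 2 - y * z + 1 = 0 ∧ y = z + z⁻¹ := by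
  obtain ⟨s, hs⟩ := IsAlgClosed.exists_pow_nat_eq (y ^ 2 - 1) (by norm_num : (0:ℕ) < 2)
  set z := -(y + s) with hzdef
  have hq : z ^ 2 - y * z + 1 = 0 := by rw [hzdef]; linear_combination hs + (y^2 + y*s) * h3
  have hz0 : z ≠ 0 := by
    intro h0; rw [h0] at hq; simp at hq
  refine ⟨z, hz0, hq, ?_⟩
  have h1 : z ^ 2 + 1 = y * z := by linear_combination hq
  have h2 : z + z⁻¹ = (z ^ 2 + 1) * z⁻¹ := by field_simp
  rw [h2, h1, mul_assoc, mul_inv_cancel₀ hz0, mul_one]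

lemma z_pow_q_sq {K : Type*} [Field K] [CharP K 3] (n : ℕ) {y z : K}
    (hy : y ^ (3 ^ n) = y) (_hz0 : z ≠ 0) (hq : z ^ 2 - y * z + 1 = 0) :
    z ^ (3 ^ (2 * n)) = z := by
  haveI : Fact (Nat.Prime 3) := ⟨by norm_num⟩
  set w := z ^ (3 ^ n) with hwdef
  have hz2 : z ^ 2 = y * z - 1 := by linear_combination hq
  have hw2 : w ^ 2 = y * w - 1 := by
    have h1 : w ^ 2 = (z ^ 2) ^ (3 ^ n) := by
      rw [hwdef, ← pow_mul, ← pow_mul, Nat.mul_comm]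
    rw [h1, hz2, sub_pow_char_pow, mul_pow, hy, one_pow, hwdef]
  have hfac : (w - z) * (w * z - 1) = 0 := by
    linear_combination z * hw2 - w * hz2
  have hsplit : z ^ (3 ^ (2 * n)) = w ^ (3 ^ n) := by
    have hexp : (3:ℕ) ^ (2 * n) = 3 ^ n * 3 ^ n := by rw [two_mul, pow_add]
    rw [hexp, pow_mul, ← hwdef]
  rcases mul_eq_zero.mp hfac with h | h
  · have hwz : w = z := sub_eq_zero.mp h
    rw [hsplit, hwz, ← hwdef, hwz]
  · have hwz : w = z⁻¹ := eq_inv_of_mul_eq_one_left (by linear_combination h)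
    rw [hsplit, hwz, inv_pow, ← hwdef, hwz, inv_inv]

lemma Gcalc {K : Type*} [Field K] [CharP K 3] (i e m : ℕ)
    (h2e : 2 * e = 3 ^ i + 1) (h3i : 3 ^ i = 2 * m + 1)
    {t : K} (ht : t ≠ 0) :
    ((t ^ 2 + (t ^ 2)⁻¹) + 1) ^ e - ((t ^ 2 + (t ^ 2)⁻¹) - 1) ^ e
      = (t ^ 2) ^ m + ((t ^ 2) ^ m)⁻¹ := by
  haveI : Fact (Nat.Prime 3) := ⟨by norm_num⟩
  have h3 : (3 : K) = 0 := CharP.cast_eq_zero K 3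
  have ht2 : t ^ 2 ≠ 0 := pow_ne_zero _ ht
  set B := (t ^ 2) ^ m with hBdef
  have hB : B ≠ 0 := pow_ne_zero _ ht2
  have e1 : (t ^ 2 + (t ^ 2)⁻¹) + 1 = (t - t⁻¹) ^ 2 := by
    field_simp
    linear_combination (t^2) * h3
  have e2 : (t ^ 2 + (t ^ 2)⁻¹) - 1 = (t + t⁻¹) ^ 2 := by
    field_simp
    linear_combination (-(t^2)) * h3
  have hA : t ^ 3 ^ i = B * t := by
    rw [hBdef, ← pow_mul, ← pow_succ, ← h3i]
  have f1 : (t - t⁻¹) ^ 3 ^ i = B * t - (B * t)⁻¹ := by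
    rw [sub_pow_char_pow, inv_pow, hA]
  have f2 : (t + t⁻¹) ^ 3 ^ i = B * t + (B * t)⁻¹ := by
    rw [add_pow_char_pow, inv_pow, hA]
  have p1 : ((t - t⁻¹) ^ 2) ^ e = (B * t - (B * t)⁻¹) * (t - t⁻¹) := by
    rw [← pow_mul, h2e, pow_succ, f1]
  have p2 : ((t + t⁻¹) ^ 2) ^ e = (B * t + (B * t)⁻¹) * (t + t⁻¹) := by
    rw [← pow_mul, h2e, pow_succ, f2]
  rw [e1, e2, p1, p2]
  have hid : (B * t - (B * t)⁻¹) * (t - t⁻¹) - (B * t + (B * t)⁻¹) * (t + t⁻¹)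
      = -2 * (B + B⁻¹) := by
    field_simp
    ring
  rw [hid]
  linear_combination (-(B + B⁻¹)) * h3

theorem stmt_4 (n i : ℕ) (hn : 0 < n) (hi2 : 2 < i) (hin : i < n)
    (hgcd : Nat.gcd i (2 * n) = 1)
    (F : Type*) [Field F] [Fintype F] (hF : Fintype.card F = 3 ^ n) :
    ∀ a : F, a ≠ 0 →
      Function.Bijective
        (fun x : F => (x + a) ^ ((3 ^ i + 1) / 2) - x ^ ((3 ^ i + 1) / 2)) := by
  intro a ha
  haveI : Fact (Nat.Prime 3) := ⟨by norm_num⟩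
  -- characteristic 3
  haveI hchar : CharP F 3 := by
    have h1 : (3 : ℕ) ∣ ringChar F := by
      rw [prime_dvd_char_iff_dvd_card, hF]
      exact dvd_pow_self 3 hn.ne'
    haveI := ringChar.charP F
    have h2 : (ringChar F).Prime := CharP.char_is_prime F (ringChar F)
    have h3 : ringChar F = 3 := ((Nat.prime_dvd_prime_iff_eq (by norm_num) h2).mp h1).symm
    exact h3 ▸ ringChar.charP F
  set e := (3 ^ i + 1) / 2 with hedef
  set m := (3 ^ i - 1) / 2 with hmdef
  -- numeric facts
  have h3i27 : 27 ≤ 3 ^ i := by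
    calc (27:ℕ) = 3 ^ 3 := by norm_num
    _ ≤ 3 ^ i := Nat.pow_le_pow_right (by norm_num) hi2
  have hodd3i : Odd (3 ^ i) := Odd.pow (⟨1, by norm_num⟩ : Odd 3)
  obtain ⟨c3, hc3⟩ := hodd3i
  have h2e : 2 * e = 3 ^ i + 1 := by
    rw [hedef]; exact Nat.mul_div_cancel' ⟨c3 + 1, by omega⟩
  have h3im : 3 ^ i = 2 * m + 1 := by
    rw [hmdef]
    have : (3 ^ i - 1) / 2 = c3 := by omega
    omega
  have hm_pos : 0 < m := by omega
  have hi_odd : Odd i := by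
    rcases Nat.even_or_odd i with he | ho
    · exfalso
      have : 2 ∣ Nat.gcd i (2 * n) := Nat.dvd_gcd he.two_dvd ⟨n, rfl⟩
      omega
    · exact ho
  have hmod4 : 3 ^ i % 4 = 3 := by
    obtain ⟨k, rfl⟩ := hi_odd
    have h9 : 3 ^ (2 * k + 1) = 9 ^ k * 3 := by rw [pow_succ, pow_mul]; norm_num
    rw [h9, Nat.mul_mod, Nat.pow_mod]; norm_num
  have he_even : Even e := by
    refine (Nat.even_iff).mpr ?_
    omega
  have hcop : Nat.Coprime m (3 ^ (2 * n) - 1) :=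
    nt_coprime n i hn (by omega) hgcd
  have hQ1 : 1 ≤ 3 ^ (2 * n) := Nat.one_le_pow _ _ (by norm_num)
  set N := 3 ^ (2 * n) - 1 with hNdef
  have hN1 : N + 1 = 3 ^ (2 * n) := by omega
  -- the algebraic closure
  set K := AlgebraicClosure F
  haveI : CharP K 3 := charP_of_injective_algebraMap (algebraMap F K).injective 3
  have h3K : (3 : K) = 0 := CharP.cast_eq_zero K 3
  have h3F : (3 : F) = 0 := CharP.cast_eq_zero F 3
  set ι : F →+* K := algebraMap F K with hidef
  have hιinj : Function.Injective ι := ι.injective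
  rw [← Finite.injective_iff_bijective]
  intro x1 x2 hx
  simp only at hx
  -- reduction to G
  have reduce : ∀ x : F, (x + a) ^ e - x ^ e
      = a ^ e * (((1 - x * a⁻¹) + 1) ^ e - ((1 - x * a⁻¹) - 1) ^ e) := by
    intro x
    set y := 1 - x * a⁻¹ with hydef
    have hx_eq : x = a * (-(y - 1)) := by
      rw [hydef]; field_simp; ring
    have hxa_eq : x + a = a * (-(y + 1)) := by
      rw [hydef]; field_simp; linear_combination a * h3F
    rw [hxa_eq, hx_eq, mul_pow, mul_pow, he_even.neg_pow, he_even.neg_pow, ← mul_sub]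
  rw [reduce x1, reduce x2] at hx
  have hae : a ^ e ≠ 0 := pow_ne_zero _ ha
  have hG : ((1 - x1 * a⁻¹) + 1) ^ e - ((1 - x1 * a⁻¹) - 1) ^ e
      = ((1 - x2 * a⁻¹) + 1) ^ e - ((1 - x2 * a⁻¹) - 1) ^ e :=
    mul_left_cancel₀ hae hx
  -- pass to K, for each j get the z
  have main : ∀ y : F, ∃ z : K, z ≠ 0 ∧ z ^ N = 1 ∧ ι y = z + z⁻¹ ∧
      ι (((y : F) + 1) ^ e - ((y : F) - 1) ^ e) = z ^ m + (z ^ m)⁻¹ := by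
    intro y
    have hYfix : (ι y) ^ (3 ^ n) = ι y := by
      rw [← map_pow]
      congr 1
      have := FiniteField.pow_card y
      rwa [hF] at this
    obtain ⟨z, hz0, hzq, hzy⟩ := exists_z h3K (ι y)
    obtain ⟨t, ht2⟩ := IsAlgClosed.exists_pow_nat_eq z (by norm_num : (0:ℕ) < 2)
    have ht0 : t ≠ 0 := by
      intro h0; rw [h0] at ht2; simp at ht2; exact hz0 ht2.symm
    have hzN : z ^ N = 1 := by
      have h1 : z ^ (3 ^ (2 * n)) = z := z_pow_q_sq n hYfix hz0 hzq
      have h2 : z ^ N * z = 1 * z := by rw [← pow_succ, hN1, h1, one_mul]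
      exact mul_right_cancel₀ hz0 h2
    refine ⟨z, hz0, hzN, hzy, ?_⟩
    have hcalc := Gcalc i e m h2e h3im ht0
    rw [ht2] at hcalc
    simp only [map_sub, map_pow, map_add, map_one]
    rw [hzy]
    exact hcalc
  obtain ⟨z1, hz10, hz1N, hz1y, hz1G⟩ := main (1 - x1 * a⁻¹)
  obtain ⟨z2, hz20, hz2N, hz2y, hz2G⟩ := main (1 - x2 * a⁻¹)
  have hGK : z1 ^ m + (z1 ^ m)⁻¹ = z2 ^ m + (z2 ^ m)⁻¹ := by
    rw [← hz1G, ← hz2G, hG]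
  have hy_eq : ι (1 - x1 * a⁻¹) = ι (1 - x2 * a⁻¹) := by
    rcases sum_inv_eq (pow_ne_zero m hz10) (pow_ne_zero m hz20) hGK with h | h
    · -- z1^m = z2^m, so z1 = z2
      have hw : (z1 * z2⁻¹) ^ m = 1 := by
        rw [mul_pow, inv_pow, h, mul_inv_cancel₀ (pow_ne_zero m hz20)]
      have hwN : (z1 * z2⁻¹) ^ N = 1 := by
        rw [mul_pow, inv_pow, hz1N, hz2N]; norm_num
      have := eq_one_of_two_pows hm_pos hcop hw hwN
      have hz12 : z1 = z2 := by
        exact (mul_inv_eq_one₀ hz20).mp this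
      rw [hz1y, hz2y, hz12]
    · -- z1^m * z2^m = 1, so z2 = z1⁻¹
      have hw : (z1 * z2) ^ m = 1 := by rw [mul_pow, h]
      have hwN : (z1 * z2) ^ N = 1 := by rw [mul_pow, hz1N, hz2N, one_mul]
      have h12 : z1 * z2 = 1 := eq_one_of_two_pows hm_pos hcop hw hwN
      have hz12 : z2 = z1⁻¹ := eq_inv_of_mul_eq_one_right h12
      rw [hz1y, hz2y, hz12, inv_inv, add_comm]
  have hy : (1 : F) - x1 * a⁻¹ = 1 - x2 * a⁻¹ := hιinj hy_eq
  have : x1 * a⁻¹ = x2 * a⁻¹ := by linear_combination -hy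
  calc x1 = x1 * a⁻¹ * a := by field_simp
  _ = x2 * a⁻¹ * a := by rw [this]
  _ = x2 := by field_simp
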